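/- Let Y ∈ ℂ^{n×p}, S ∈ ℂ^{p×p} invertible, and define F(θ) := Y exp(θS). For the operator 𝓑 given by (𝓑φ)(θ) = ∫₀^θ φ + (B(d/dθ)φ)(0) with B(λ) = M(0)^{-1}(M(0) − M(λ))/λ, one has (𝓑F)(θ) − F(θ) S^{-1} = −M(0)^{-1} 𝕄(Y,S) S^{-1} for all θ; in particular the left-hand side is constant in θ. -/

import Mathlib

open NormedSpace
open scoped Matrix

/-- `𝕄(Y,S) = Σ_i A_i Y S^i` where `A_i = M^{(i)}(0)/i!` are the Taylor
coefficients of the analytic matrix function `M`. -/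
noncomputable def MMfun {n p : ℕ} (A : ℕ → Matrix (Fin n) (Fin n) ℂ)
    (Y : Matrix (Fin n) (Fin p) ℂ) (S : Matrix (Fin p) (Fin p) ℂ) :
    Matrix (Fin n) (Fin p) ℂ :=
  ∑' i : ℕ, A i * Y * S ^ i

/-- Lemma A.1: let `M(λ) = Σ_i λ^i A_i` be analytic with `M(0) = A 0`
invertible, and let `B(λ) = M(0)⁻¹(M(0)−M(λ))/λ` have Taylor coefficients `Bc i`
(equivalently `M(0)·Bc i = −A_{i+1}`).  For `F(θ) = Y exp(θS)` with `S` invertible,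
the operator `𝓑`, `(𝓑φ)(θ) = ∫₀^θ φ + (B(d/dθ)φ)(0)` (where
`(B(d/dθ)F)(0) = Σ_i Bc i · F^{(i)}(0) = Σ_i Bc i · Y S^i`), satisfies
`(𝓑F)(θ) − F(θ)S⁻¹ = −M(0)⁻¹ 𝕄(Y,S) S⁻¹` for all `θ` (entrywise). -/
theorem stmt8 {n p : ℕ} (A Bc : ℕ → Matrix (Fin n) (Fin n) ℂ)
    (Y : Matrix (Fin n) (Fin p) ℂ) (S : Matrix (Fin p) (Fin p) ℂ)
    (hS : IsUnit S) (hM0 : IsUnit (A 0))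
    (hBc : ∀ i : ℕ, A 0 * Bc i = -(A (i + 1)))
    (hsumB : Summable fun i : ℕ => Bc i * (Y * S ^ i))
    (hsumM : Summable fun i : ℕ => A i * Y * S ^ i) :
    ∀ (θ : ℝ) (a : Fin n) (b : Fin p),
      ((∫ s in (0:ℝ)..θ, (Y * exp ((s : ℂ) • S)) a b) +
          (∑' i : ℕ, Bc i * (Y * S ^ i)) a b) -
        ((Y * exp ((θ : ℂ) • S)) * S⁻¹) a b =
      (-((A 0)⁻¹ * MMfun A Y S * S⁻¹)) a b := by
  intro θ a b
  have hdetA : IsUnit (A 0).det := (Matrix.isUnit_iff_isUnit_det _).mp hM0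
  have hdetS : IsUnit S.det := (Matrix.isUnit_iff_isUnit_det _).mp hS
  have hSinv : S * S⁻¹ = 1 := Matrix.mul_nonsing_inv S hdetS
  have hAinv : (A 0)⁻¹ * A 0 = 1 := Matrix.nonsing_inv_mul (A 0) hdetA
  set T : Matrix (Fin n) (Fin p) ℂ := ∑' i : ℕ, Bc i * (Y * S ^ i) with hTdef
  let L0 : Matrix (Fin n) (Fin p) ℂ →L[ℂ] Matrix (Fin n) (Fin p) ℂ :=
    { toFun := fun X => A 0 * X
      map_add' := fun X Z => Matrix.mul_add _ X Z
      map_smul' := fun c X => Matrix.mul_smul _ c X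
      cont := continuous_const.matrix_mul continuous_id }
  let R : Matrix (Fin n) (Fin p) ℂ →L[ℂ] Matrix (Fin n) (Fin p) ℂ :=
    { toFun := fun X => X * S
      map_add' := fun X Z => Matrix.add_mul X Z _
      map_smul' := fun c X => Matrix.smul_mul c X _
      cont := continuous_id.matrix_mul continuous_const }
  -- Step 1: the series identity
  have hA0T : A 0 * T = ∑' i : ℕ, -(A (i + 1) * (Y * S ^ i)) := by
    calc A 0 * T = L0 T := rfl
      _ = ∑' i : ℕ, L0 (Bc i * (Y * S ^ i)) := by rw [hTdef]; exact L0.map_tsum hsumB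
      _ = ∑' i : ℕ, -(A (i + 1) * (Y * S ^ i)) := by
          refine tsum_congr fun i => ?_
          show A 0 * (Bc i * (Y * S ^ i)) = _
          rw [← Matrix.mul_assoc, hBc i]
          exact Matrix.neg_mul _ _
  have hU : Summable fun i : ℕ => A (i + 1) * (Y * S ^ i) := by
    have h1 : Summable fun i : ℕ => -(A (i + 1) * (Y * S ^ i)) := by
      have h2 := hsumB.map L0.toLinearMap L0.continuous
      refine h2.congr fun i => ?_
      show A 0 * (Bc i * (Y * S ^ i)) = _
      rw [← Matrix.mul_assoc, hBc i]
      exact Matrix.neg_mul _ _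
    simpa using h1.neg
  set U : Matrix (Fin n) (Fin p) ℂ := ∑' i : ℕ, A (i + 1) * (Y * S ^ i) with hUdef
  have hA0T' : A 0 * T = -U := by rw [hA0T, hUdef, tsum_neg]
  have hUS : U * S = ∑' i : ℕ, A (i + 1) * (Y * S ^ (i + 1)) := by
    calc U * S = R U := rfl
      _ = ∑' i : ℕ, R (A (i + 1) * (Y * S ^ i)) := by rw [hUdef]; exact R.map_tsum hU
      _ = ∑' i : ℕ, A (i + 1) * (Y * S ^ (i + 1)) := by
          refine tsum_congr fun i => ?_
          show (A (i + 1) * (Y * S ^ i)) * S = _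
          rw [Matrix.mul_assoc, Matrix.mul_assoc, ← pow_succ]
  have hMM : MMfun A Y S = A 0 * Y + U * S := by
    rw [MMfun, Summable.tsum_eq_zero_add hsumM, pow_zero, Matrix.mul_one, hUS]
    congr 1
    exact tsum_congr fun i => Matrix.mul_assoc _ _ _
  have key : A 0 * T * S = A 0 * Y - MMfun A Y S := by
    rw [hA0T', hMM, Matrix.neg_mul]
    abel
  have e1 : (A 0)⁻¹ * (A 0 * T * S) * S⁻¹ = T := by
    rw [Matrix.mul_assoc (A 0) T S, ← Matrix.mul_assoc ((A 0)⁻¹) (A 0) (T * S), hAinv,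
      Matrix.one_mul, Matrix.mul_assoc T S S⁻¹, hSinv, Matrix.mul_one]
  have hT : T = Y * S⁻¹ - (A 0)⁻¹ * MMfun A Y S * S⁻¹ := by
    rw [← e1, key, Matrix.mul_sub, Matrix.sub_mul, ← Matrix.mul_assoc (A 0)⁻¹ (A 0) Y,
      hAinv, Matrix.one_mul]
  -- Step 2: the integral
  letI : SeminormedRing (Matrix (Fin p) (Fin p) ℂ) := Matrix.linftyOpSemiNormedRing
  letI : NormedRing (Matrix (Fin p) (Fin p) ℂ) := Matrix.linftyOpNormedRing
  letI : NormedAlgebra ℂ (Matrix (Fin p) (Fin p) ℂ) := Matrix.linftyOpNormedAlgebra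
  let φ : Matrix (Fin p) (Fin p) ℂ →L[ℂ] ℂ :=
    { toFun := fun X => (Y * X * S⁻¹) a b
      map_add' := fun X Z => by
        simp [Matrix.mul_add, Matrix.add_mul, Matrix.add_apply]
      map_smul' := fun c X => by
        simp [Matrix.mul_smul, Matrix.smul_mul, Matrix.smul_apply, smul_eq_mul]
      cont := ((continuous_const.matrix_mul continuous_id).matrix_mul
        continuous_const).matrix_elem a b }
  have hderiv : ∀ s : ℝ, HasDerivAt (fun t : ℝ => φ (exp ((t : ℂ) • S)))
      ((Y * exp ((s : ℂ) • S)) a b) s := by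
    intro s
    have h1 : HasDerivAt (fun w : ℂ => exp (w • S)) (exp ((s : ℂ) • S) * S) (s : ℂ) :=
      hasDerivAt_exp_smul_const S ((s : ℝ) : ℂ)
    have h2 : HasDerivAt (fun w : ℂ => φ (exp (w • S)))
        (φ (exp ((s : ℂ) • S) * S)) (s : ℂ) :=
      (φ.hasFDerivAt.comp_hasDerivAt _ h1)
    have h3 := h2.comp_ofReal
    convert h3 using 1
    show (Y * exp ((s : ℂ) • S)) a b = (Y * (exp ((s : ℂ) • S) * S) * S⁻¹) a b
    rw [← Matrix.mul_assoc, Matrix.mul_assoc (Y * exp ((s : ℂ) • S)) S S⁻¹, hSinv,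
      Matrix.mul_one]
  have hcont : Continuous fun s : ℝ => (Y * exp ((s : ℂ) • S)) a b := by
    have h1 : Continuous fun s : ℝ => exp ((s : ℂ) • S) :=
      continuous_iff_continuousAt.2 fun s =>
        (hasDerivAt_exp_smul_const S ((s : ℝ) : ℂ)).continuousAt.comp
          Complex.continuous_ofReal.continuousAt
    exact (continuous_const.matrix_mul h1).matrix_elem a b
  have hint : (∫ s in (0:ℝ)..θ, (Y * exp ((s : ℂ) • S)) a b)
      = φ (exp ((θ : ℂ) • S)) - φ (exp (((0:ℝ) : ℂ) • S)) :=
    intervalIntegral.integral_eq_sub_of_hasDerivAt (fun s _ => hderiv s)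
      (hcont.intervalIntegrable 0 θ)
  have hφθ : φ (exp ((θ : ℂ) • S)) = ((Y * exp ((θ : ℂ) • S)) * S⁻¹) a b := rfl
  have hφ0 : φ (exp (((0:ℝ) : ℂ) • S)) = (Y * S⁻¹) a b := by
    show (Y * exp (((0:ℝ) : ℂ) • S) * S⁻¹) a b = _
    rw [Complex.ofReal_zero, zero_smul, exp_zero, Matrix.mul_one]
  rw [hint, hφθ, hφ0, hT]
  simp only [Matrix.sub_apply, Matrix.neg_apply]
  ring
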